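/- arXiv:2007.08458 — 3 statements merged into one kernel-verified Lean document; each statement's English description precedes it below -/
import Mathlib

section
/- Let H be a complex Hilbert space, let A_1,…,A_p be bounded linear operators on H, let Ã be the companion operator of A_1,…,A_p on H^p, and assume there exists j_0 ∈ ℕ with ‖Ã^{j_0}‖ < 1. Then for every z ∈ ℂ with |z| ≤ 1: (i) the operator Id_{H^p} − z Ã is invertible in the bounded operators on H^p; (ii) the operator 𝒜(z) := Id_H − A_1 z − ⋯ − A_p z^p is invertible in the bounded operators on H; and (iii) the series Σ_{j=0}^∞ z^j P_1 ∘ Ã^j ∘ P_1* converges absolutely in operator norm and equals 𝒜(z)^{−1}. -/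
open Complex

lemma aux_summable {𝔸 : Type*} [NormedRing 𝔸] {a : 𝔸} {n : ℕ} (hn : 0 < n)
    (h : ‖a ^ n‖ < 1) : Summable fun j : ℕ => ‖a ^ j‖ := by
  haveI : NeZero n := ⟨hn.ne'⟩
  set ρ := ‖a ^ n‖ with hρ
  have hρ0 : (0:ℝ) ≤ ρ := norm_nonneg _
  set C : ℝ := ‖(1:𝔸)‖ + max 1 ‖a‖ ^ n with hC
  have hmax : (0:ℝ) ≤ max 1 ‖a‖ ^ n := pow_nonneg (le_trans zero_le_one (le_max_left _ _)) _
  have hbound : ∀ j : ℕ, ‖a ^ j‖ ≤ C * ρ ^ (j / n) := by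
    intro j
    have hj : a ^ j = (a ^ n) ^ (j / n) * a ^ (j % n) := by
      rw [← pow_mul, ← pow_add, Nat.div_add_mod]
    have hrem : ‖a ^ (j % n)‖ ≤ C := by
      rcases Nat.eq_zero_or_pos (j % n) with h0 | hpos
      · rw [h0, pow_zero]; linarith
      · calc ‖a ^ (j % n)‖ ≤ ‖a‖ ^ (j % n) := norm_pow_le' a hpos
          _ ≤ max 1 ‖a‖ ^ (j % n) :=
            pow_le_pow_left₀ (norm_nonneg _) (le_max_right _ _) _
          _ ≤ max 1 ‖a‖ ^ n :=
            pow_le_pow_right₀ (le_max_left _ _) (Nat.mod_lt _ hn).le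
          _ ≤ C := by have := norm_nonneg (1:𝔸); linarith
    rcases Nat.eq_zero_or_pos (j / n) with hq | hq
    · rw [hq, pow_zero, mul_one]
      calc ‖a ^ j‖ = ‖a ^ (j % n)‖ := by rw [hj, hq, pow_zero, one_mul]
        _ ≤ C := hrem
    · have h1 : ‖a ^ j‖ ≤ ‖(a ^ n) ^ (j / n)‖ * ‖a ^ (j % n)‖ := by
        rw [hj]; exact norm_mul_le _ _
      have h2 : ‖(a ^ n) ^ (j / n)‖ * ‖a ^ (j % n)‖ ≤ ρ ^ (j / n) * C :=
        mul_le_mul (norm_pow_le' _ hq) hrem (norm_nonneg _) (pow_nonneg hρ0 _)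
      linarith [h1, h2, mul_comm C (ρ ^ (j / n))]
  refine Summable.of_nonneg_of_le (fun j => norm_nonneg _) hbound ?_
  have hg : Summable fun q : ℕ => C * ρ ^ q :=
    (summable_geometric_of_lt_one hρ0 h).mul_left C
  have hC0 : (0:ℝ) ≤ C := by
    have : (0:ℝ) ≤ ‖(1:𝔸)‖ := norm_nonneg _
    simp only [hC]; linarith
  have hprod : Summable fun x : ℕ × Fin n => (C * ρ ^ x.1) * (fun _ : Fin n => (1:ℝ)) x.2 :=
    Summable.mul_of_nonneg (f := fun q : ℕ => C * ρ ^ q) (g := fun _ : Fin n => (1:ℝ))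
      hg Summable.of_finite (fun q => mul_nonneg hC0 (pow_nonneg hρ0 _)) (fun _ => zero_le_one)
  have key := (Nat.divModEquiv n).summable_iff.mpr hprod
  refine key.congr fun j => ?_
  simp [Nat.divModEquiv, Function.comp]

lemma aux_geom {𝔸 : Type*} [NormedRing 𝔸] [CompleteSpace 𝔸] {x : 𝔸}
    (h : Summable fun j : ℕ => ‖x ^ j‖) :
    ∃ S, HasSum (fun j : ℕ => x ^ j) S ∧ (1 - x) * S = 1 ∧ S * (1 - x) = 1 := by
  have hs : Summable fun j : ℕ => x ^ j := Summable.of_norm h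
  set S := ∑' j : ℕ, x ^ j with hS
  have hh : HasSum (fun j : ℕ => x ^ j) S := hs.hasSum
  have hshift : HasSum (fun n : ℕ => x ^ (n + 1)) (S - 1) := by
    refine (hasSum_nat_add_iff 1).2 ?_
    simpa using hh
  have hxS : x * S = S - 1 := by
    have h1 : HasSum (fun n : ℕ => x * x ^ n) (x * S) := hh.mul_left x
    have h1' : HasSum (fun n : ℕ => x ^ (n + 1)) (x * S) := by
      simpa [pow_succ'] using h1
    exact h1'.unique hshift
  have hSx : S * x = S - 1 := by
    have h1 : HasSum (fun n : ℕ => x ^ n * x) (S * x) := hh.mul_right x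
    have h1' : HasSum (fun n : ℕ => x ^ (n + 1)) (S * x) := by
      simpa [pow_succ] using h1
    exact h1'.unique hshift
  exact ⟨S, hh, by rw [sub_mul, one_mul, hxS]; abel, by rw [mul_sub, mul_one, hSx]; abel⟩


section CLMWrap

variable {E : Type*} [NormedAddCommGroup E] [NormedSpace ℂ E]

lemma auxCLM_summable {a : E →L[ℂ] E} {n : ℕ} (hn : 0 < n) (h : ‖a ^ n‖ < 1) :
    Summable fun j : ℕ => ‖a ^ j‖ := aux_summable hn h

lemma auxCLM_geom [CompleteSpace E] {x : E →L[ℂ] E}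
    (h : Summable fun j : ℕ => ‖x ^ j‖) :
    ∃ S, HasSum (fun j : ℕ => x ^ j) S ∧ (1 - x) * S = 1 ∧ S * (1 - x) = 1 := aux_geom h

lemma auxCLM_smul_pow (z : ℂ) (a : E →L[ℂ] E) (j : ℕ) :
    (z • a) ^ j = z ^ j • a ^ j := smul_pow z a j

lemma auxCLM_norm_smul (c : ℂ) (a : E →L[ℂ] E) : ‖c • a‖ = ‖c‖ * ‖a‖ := norm_smul c a

lemma auxCLM_ring_inverse_unit (u : (E →L[ℂ] E)ˣ) :
    Ring.inverse (u : E →L[ℂ] E) = ↑u⁻¹ := Ring.inverse_unit u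

end CLMWrap


set_option maxHeartbeats 2000000 in
set_option synthInstance.maxHeartbeats 400000 in
/-- Let `Ã` be the companion operator of bounded operators `A_1,…,A_p`
on the Hilbert direct sum `H^p`, with `‖Ã^{j₀}‖ < 1` for some positive integer `j₀`. Then
for every `z ∈ ℂ` with `|z| ≤ 1`: (i) `Id_{H^p} - z·Ã` is invertible; (ii) the operator
polynomial `𝒜(z) = Id_H - A_1 z - ⋯ - A_p z^p` is invertible; (iii) the series
`Σ_j z^j P₁ ∘ Ã^j ∘ P₁*` converges absolutely in operator norm and equals `𝒜(z)⁻¹`.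
(Operators are indexed by `Fin p`, with `A j` standing for `A_{j+1}`.) -/
theorem companion_operator_neumann_inverts_ar_polynomial
    {H : Type*} [NormedAddCommGroup H] [InnerProductSpace ℂ H] [CompleteSpace H]
    (p : ℕ) (hp : 0 < p) (A : Fin p → H →L[ℂ] H)
    (Atil : PiLp 2 (fun _ : Fin p => H) →L[ℂ] PiLp 2 (fun _ : Fin p => H))
    (hAtil : ∀ (f : PiLp 2 (fun _ : Fin p => H)) (i : Fin p),
      Atil f i =
        if h : (i : ℕ) = 0 then ∑ j : Fin p, A j (f j)
        else f ⟨(i : ℕ) - 1, lt_of_le_of_lt (Nat.sub_le _ _) i.isLt⟩)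
    (j₀ : ℕ) (hj₀ : 0 < j₀) (hnorm : ‖Atil ^ j₀‖ < 1)
    (P1 : PiLp 2 (fun _ : Fin p => H) →L[ℂ] H)
    (hP1 : ∀ f : PiLp 2 (fun _ : Fin p => H), P1 f = f ⟨0, hp⟩)
    (P1s : H →L[ℂ] PiLp 2 (fun _ : Fin p => H))
    (hP1s : ∀ (g : H) (i : Fin p), P1s g i = if (i : ℕ) = 0 then g else 0) :
    ∀ z : ℂ, ‖z‖ ≤ 1 →
      IsUnit (1 - z • Atil) ∧
      IsUnit ((1 : H →L[ℂ] H) - ∑ j : Fin p, z ^ ((j : ℕ) + 1) • A j) ∧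
      (Summable fun j : ℕ => ‖z ^ j • (P1.comp ((Atil ^ j).comp P1s))‖) ∧
      HasSum (fun j : ℕ => z ^ j • (P1.comp ((Atil ^ j).comp P1s)))
        (Ring.inverse ((1 : H →L[ℂ] H) - ∑ j : Fin p, z ^ ((j : ℕ) + 1) • A j)) := by
  intro z hz
  haveI hcompl : CompleteSpace (PiLp 2 fun _ : Fin p => H) := by
    infer_instance
  have hzn : ‖z‖ ≤ 1 := by simpa using hz
  have hsumA : Summable fun j : ℕ => ‖Atil ^ j‖ := auxCLM_summable hj₀ hnorm
  have hxpow : ∀ j : ℕ, (z • Atil) ^ j = z ^ j • Atil ^ j := fun j => auxCLM_smul_pow z Atil j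
  have hsx : Summable fun j : ℕ => ‖(z • Atil) ^ j‖ := by
    refine Summable.of_nonneg_of_le (fun j => norm_nonneg ((z • Atil) ^ j)) (fun j => ?_) hsumA
    rw [hxpow j, auxCLM_norm_smul, norm_pow]
    have h1 : ‖z‖ ^ j ≤ 1 := pow_le_one₀ (norm_nonneg z) hzn
    nlinarith [norm_nonneg (Atil ^ j)]
  obtain ⟨S, hS, hl, hr⟩ := auxCLM_geom hsx
  have hu1 : IsUnit ((1 : _) - z • Atil) := ⟨⟨1 - z • Atil, S, hl, hr⟩, rfl⟩
  set 𝒜 : H →L[ℂ] H := (1 : H →L[ℂ] H) - ∑ j : Fin p, z ^ ((j : ℕ) + 1) • A j with h𝒜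
  set F : H →L[ℂ] H := P1.comp (S.comp P1s) with hF
  -- componentwise formula for (1 - z • Atil)
  have hcomp : ∀ (f : PiLp 2 fun _ : Fin p => H) (i : Fin p),
      ((1 - z • Atil) f) i = f i - z • (Atil f) i := by
    intro f i
    rw [ContinuousLinearMap.sub_apply, ContinuousLinearMap.smul_apply,
      ContinuousLinearMap.one_apply]
    rfl
  -- (a) : 𝒜 * F = 1
  have ha : 𝒜 * F = 1 := by
    ext g
    set f := S (P1s g) with hf
    have heq : (1 - z • Atil) f = P1s g := by
      have h1 := congrArg
        (fun T : (PiLp 2 (fun _ : Fin p => H)) →L[ℂ] (PiLp 2 (fun _ : Fin p => H)) =>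
          T (P1s g)) hl
      simpa using h1
    have hstep : ∀ m (hm : m + 1 < p),
        f ⟨m + 1, hm⟩ = z • f ⟨m, by omega⟩ := by
      intro m hm
      have h1 : ((1 - z • Atil) f) ⟨m + 1, hm⟩ = (P1s g) ⟨m + 1, hm⟩ := by
        rw [heq]
      rw [hcomp, hAtil, hP1s] at h1
      simp only [Nat.add_sub_cancel] at h1
      rw [dif_neg (by simp), if_neg (by simp)] at h1
      have := sub_eq_zero.mp h1
      simpa using this
    have hgeo : ∀ m (hm : m < p), f ⟨m, hm⟩ = z ^ m • f ⟨0, hp⟩ := by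
      intro m
      induction m with
      | zero => intro hm; simp
      | succ k ih =>
        intro hm
        rw [hstep k hm, ih (by omega), smul_smul, ← pow_succ']
    have h0 : ((1 - z • Atil) f) ⟨0, hp⟩ = (P1s g) ⟨0, hp⟩ := by rw [heq]
    rw [hcomp, hAtil, hP1s, dif_pos rfl, if_pos rfl] at h0
    have hsum0 : (∑ j : Fin p, A j (f j)) = ∑ j : Fin p, z ^ (j : ℕ) • A j (f ⟨0, hp⟩) := by
      refine Finset.sum_congr rfl fun j _ => ?_
      rw [show f j = z ^ (j : ℕ) • f ⟨0, hp⟩ from hgeo j j.isLt, map_smul]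
    rw [hsum0] at h0
    have hFg : F g = f ⟨0, hp⟩ := by
      rw [hF, ContinuousLinearMap.comp_apply, ContinuousLinearMap.comp_apply, hP1]
    rw [ContinuousLinearMap.mul_apply, ContinuousLinearMap.one_apply, hFg, h𝒜,
      ContinuousLinearMap.sub_apply, ContinuousLinearMap.one_apply,
      ContinuousLinearMap.sum_apply]
    rw [← h0]
    congr 1
    rw [Finset.smul_sum]
    refine Finset.sum_congr rfl fun j _ => ?_
    rw [ContinuousLinearMap.smul_apply, smul_smul, ← pow_succ']
  -- (b) : F * 𝒜 = 1
  have hb : F * 𝒜 = 1 := by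
    ext g
    set w : PiLp 2 (fun _ : Fin p => H) := WithLp.toLp 2 (fun i : Fin p => z ^ (i : ℕ) • g) with hw
    have hweq : (1 - z • Atil) w = P1s (𝒜 g) := by
      ext i
      rw [hcomp, hAtil, hP1s]
      rcases Nat.eq_zero_or_pos (i : ℕ) with h0 | hpos
      · rw [dif_pos h0, if_pos h0]
        have hwj : ∀ j : Fin p, w j = z ^ (j : ℕ) • g := fun j => rfl
        have hwi : w i = g := by rw [hwj i, h0, pow_zero, one_smul]
        rw [hwi]
        simp only [hwj, map_smul]
        rw [h𝒜, ContinuousLinearMap.sub_apply, ContinuousLinearMap.one_apply,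
          ContinuousLinearMap.sum_apply]
        rw [Finset.smul_sum]
        congr 1
        refine Finset.sum_congr rfl fun j _ => ?_
        rw [ContinuousLinearMap.smul_apply, smul_smul, ← pow_succ']
      · rw [dif_neg (by omega), if_neg (by omega)]
        have hwi : w i = z ^ (i : ℕ) • g := rfl
        have hwi' : w ⟨(i : ℕ) - 1, lt_of_le_of_lt (Nat.sub_le _ _) i.isLt⟩
            = z ^ ((i : ℕ) - 1) • g := rfl
        rw [hwi, hwi', smul_smul, ← pow_succ']
        rw [show (i : ℕ) - 1 + 1 = (i : ℕ) from by omega, sub_self]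
    have hSw : S (P1s (𝒜 g)) = w := by
      have h1 := congrArg
        (fun T : (PiLp 2 (fun _ : Fin p => H)) →L[ℂ] (PiLp 2 (fun _ : Fin p => H)) =>
          T w) hr
      simp only [ContinuousLinearMap.mul_apply, ContinuousLinearMap.one_apply] at h1
      rw [hweq] at h1
      exact h1
    rw [ContinuousLinearMap.mul_apply, ContinuousLinearMap.one_apply, hF,
      ContinuousLinearMap.comp_apply, ContinuousLinearMap.comp_apply, hSw, hP1]
    show z ^ ((⟨0, hp⟩ : Fin p) : ℕ) • g = g
    simp
  have hu2 : IsUnit 𝒜 := ⟨⟨𝒜, F, ha, hb⟩, rfl⟩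
  -- (iii)
  have hnormle : ∀ j : ℕ, ‖z ^ j • (P1.comp ((Atil ^ j).comp P1s))‖
      ≤ (‖P1‖ * ‖P1s‖) * ‖(z • Atil) ^ j‖ := by
    intro j
    rw [norm_smul, norm_pow, hxpow j, auxCLM_norm_smul, norm_pow]
    have hc : ‖P1.comp ((Atil ^ j).comp P1s)‖ ≤ ‖P1‖ * (‖Atil ^ j‖ * ‖P1s‖) :=
      le_trans (ContinuousLinearMap.opNorm_comp_le _ _)
        (mul_le_mul_of_nonneg_left (ContinuousLinearMap.opNorm_comp_le _ _) (norm_nonneg _))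
    have hzj : (0:ℝ) ≤ ‖z‖ ^ j := pow_nonneg (norm_nonneg _) _
    nlinarith [norm_nonneg P1, norm_nonneg P1s, norm_nonneg (Atil ^ j)]
  have hsummableN : Summable fun j : ℕ => ‖z ^ j • (P1.comp ((Atil ^ j).comp P1s))‖ :=
    Summable.of_nonneg_of_le (fun j => norm_nonneg _) hnormle (hsx.mul_left _)
  have hfun : ∀ j : ℕ, z ^ j • (P1.comp ((Atil ^ j).comp P1s))
      = P1.comp ((((z • Atil) ^ j)).comp P1s) := by
    intro j
    rw [hxpow j]
    ext g
    simp [ContinuousLinearMap.comp_apply, map_smul]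
  have hmap : HasSum (fun j : ℕ => P1.comp ((((z • Atil) ^ j)).comp P1s)) F := by
    let L1 := ContinuousLinearMap.compL ℂ (PiLp 2 (fun _ : Fin p => H))
      (PiLp 2 (fun _ : Fin p => H)) H P1
    let L2 := (ContinuousLinearMap.compL ℂ H (PiLp 2 (fun _ : Fin p => H)) H).flip P1s
    have := (hS.mapL (L2.comp L1))
    simpa [L1, L2, hF, ContinuousLinearMap.comp_assoc] using this
  have hinv : Ring.inverse 𝒜 = F := by
    have h := auxCLM_ring_inverse_unit (⟨𝒜, F, ha, hb⟩ : (H →L[ℂ] H)ˣ)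
    simpa using h
  refine ⟨hu1, hu2, hsummableN, ?_⟩
  rw [hinv]
  have : (fun j : ℕ => z ^ j • (P1.comp ((Atil ^ j).comp P1s)))
      = fun j : ℕ => P1.comp ((((z • Atil) ^ j)).comp P1s) := funext hfun
  rw [this]
  exact hmap
end

section
/- Let H be a complex Hilbert space, S a bounded linear operator on H, and a : ℕ → B(H) a sequence of bounded linear operators with Σ_{s=0}^∞ ‖a_s‖_{op} < ∞. For ω ∈ [0,2π] define A(ω) := Σ_{s=0}^∞ a_s e^{−isω} (the series converging absolutely in operator norm), and for h ∈ ℤ define R_h := Σ_{s=0}^∞ a_{s+h} ∘ S ∘ a_s* when h ≥ 0 and R_h := Σ_{s=0}^∞ a_s ∘ S ∘ a_{s+|h|}* when h < 0 (these series converge absolutely in operator norm). Then Σ_{h∈ℤ} ‖R_h‖_{op} < ∞, the map ω ↦ A(ω) S A(ω)* e^{ihω} is continuous and Bochner integrable on [0,2π], and R_h = (2π)^{−1} ∫_0^{2π} A(ω) S A(ω)* e^{ihω} dω for every h ∈ ℤ. -/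
open MeasureTheory Real Complex Filter

private lemma scalar_int (k : ℤ) :
    ∫ ω in Set.Icc (0:ℝ) (2*π), Complex.exp (Complex.I * (k:ℂ) * ω) ∂volume
      = if k = 0 then ((2*π:ℝ):ℂ) else 0 := by
  rw [integral_Icc_eq_integral_Ioc, ← intervalIntegral.integral_of_le (by positivity)]
  by_cases hk : k = 0
  · simp [hk, two_pi_pos.le]
  · rw [if_neg hk]
    have h1 : (Complex.I * k) ≠ 0 := by
      simp [Complex.I_ne_zero, Complex.ext_iff]
      exact_mod_cast hk
    have := integral_exp_mul_complex (a := 0) (b := 2*π) h1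
    simp only [mul_assoc] at this ⊢
    rw [this]
    push_cast
    have h2 : Complex.exp (Complex.I * ((k:ℂ) * (2 * (π:ℂ)))) = 1 := by
      rw [show Complex.I * ((k:ℂ) * (2*(π:ℂ))) = (k:ℂ) * (2 * π * Complex.I) by ring]
      exact Complex.exp_int_mul_two_pi_mul_I k
    simp [h2]

private lemma norm_exp_int (k : ℤ) (ω : ℝ) : ‖Complex.exp (Complex.I * (k:ℂ) * ω)‖ = 1 := by
  simp [Complex.norm_exp]

private lemma norm_exp_nat (s : ℕ) (ω : ℝ) : ‖Complex.exp (-(Complex.I * (s:ℂ) * ω))‖ = 1 := by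
  simp [Complex.norm_exp]

set_option maxHeartbeats 1600000 in
/-- Let `S` be a bounded operator on a complex Hilbert space `H` and
`a : ℕ → B(H)` with `Σ ‖a_s‖ < ∞`. Let `A(ω) = Σ_s a_s e^{-isω}` and, for `h ∈ ℤ`,
`R_h = Σ_s a_{s+h} S a_s*` (for `h ≥ 0`), `R_h = Σ_s a_s S a_{s+|h|}*` (for `h < 0`),
all series converging absolutely in operator norm. Then `Σ_h ‖R_h‖ < ∞`, the map
`ω ↦ e^{ihω} A(ω) S A(ω)*` is continuous and Bochner integrable on `[0,2π]`, and
`R_h = (2π)⁻¹ ∫₀^{2π} e^{ihω} A(ω) S A(ω)* dω` for all `h ∈ ℤ`. -/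
theorem causal_filter_white_noise_spectral_identity
    {H : Type*} [NormedAddCommGroup H] [InnerProductSpace ℂ H] [CompleteSpace H]
    (S : H →L[ℂ] H) (a : ℕ → H →L[ℂ] H)
    (ha : Summable fun s => ‖a s‖)
    (A : ℝ → H →L[ℂ] H)
    (hA : ∀ ω : ℝ, HasSum (fun s : ℕ => Complex.exp (-(Complex.I * s * ω)) • a s) (A ω))
    (R : ℤ → H →L[ℂ] H)
    (hRpos : ∀ h : ℤ, 0 ≤ h →
      HasSum (fun s : ℕ => (a (s + h.toNat)).comp (S.comp (ContinuousLinearMap.adjoint (a s))))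
        (R h))
    (hRneg : ∀ h : ℤ, h < 0 →
      HasSum (fun s : ℕ => (a s).comp (S.comp (ContinuousLinearMap.adjoint (a (s + (-h).toNat)))))
        (R h)) :
    (∀ ω : ℝ, Summable fun s : ℕ => ‖Complex.exp (-(Complex.I * s * ω)) • a s‖) ∧
    (∀ h : ℤ, 0 ≤ h →
      Summable fun s : ℕ => ‖(a (s + h.toNat)).comp (S.comp (ContinuousLinearMap.adjoint (a s)))‖) ∧
    (∀ h : ℤ, h < 0 →
      Summable fun s : ℕ => ‖(a s).comp (S.comp (ContinuousLinearMap.adjoint (a (s + (-h).toNat))))‖) ∧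
    Summable (fun h : ℤ => ‖R h‖) ∧
    (∀ h : ℤ,
      ContinuousOn
        (fun ω : ℝ => Complex.exp (Complex.I * h * ω) •
          ((A ω).comp (S.comp (ContinuousLinearMap.adjoint (A ω)))))
        (Set.Icc 0 (2 * π)) ∧
      IntegrableOn
        (fun ω : ℝ => Complex.exp (Complex.I * h * ω) •
          ((A ω).comp (S.comp (ContinuousLinearMap.adjoint (A ω)))))
        (Set.Icc 0 (2 * π)) MeasureTheory.volume ∧
      R h = (2 * π : ℝ)⁻¹ •
        ∫ ω in Set.Icc (0 : ℝ) (2 * π),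
          Complex.exp (Complex.I * h * ω) •
            ((A ω).comp (S.comp (ContinuousLinearMap.adjoint (A ω)))) ∂MeasureTheory.volume) := by
  -- basic bounds
  have hterm_bound : ∀ m s : ℕ,
      ‖(a m).comp (S.comp (ContinuousLinearMap.adjoint (a s)))‖ ≤ ‖S‖ * ‖a m‖ * ‖a s‖ := by
    intro m s
    calc ‖(a m).comp (S.comp (ContinuousLinearMap.adjoint (a s)))‖
        ≤ ‖a m‖ * ‖S.comp (ContinuousLinearMap.adjoint (a s))‖ :=
          ContinuousLinearMap.opNorm_comp_le _ _
      _ ≤ ‖a m‖ * (‖S‖ * ‖ContinuousLinearMap.adjoint (a s)‖) := by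
          gcongr; exact ContinuousLinearMap.opNorm_comp_le _ _
      _ = ‖S‖ * ‖a m‖ * ‖a s‖ := by
          rw [LinearIsometryEquiv.norm_map]; ring
  set C := ∑' s, ‖a s‖ with hC
  have hbound : ∀ n, ‖a n‖ ≤ C := fun n => Summable.le_tsum ha n (fun _ _ => norm_nonneg _)
  have hC0 : 0 ≤ C := tsum_nonneg fun _ => norm_nonneg _
  -- Part 1
  have part1 : ∀ ω : ℝ, Summable fun s : ℕ => ‖Complex.exp (-(Complex.I * s * ω)) • a s‖ := by
    intro ω
    have : (fun s : ℕ => ‖Complex.exp (-(Complex.I * s * ω)) • a s‖) = fun s => ‖a s‖ := by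
      funext s; rw [norm_smul, norm_exp_nat, one_mul]
    rw [this]; exact ha
  -- Parts 2 and 3
  have part2 : ∀ h : ℤ, 0 ≤ h →
      Summable fun s : ℕ =>
        ‖(a (s + h.toNat)).comp (S.comp (ContinuousLinearMap.adjoint (a s)))‖ := by
    intro h _
    refine Summable.of_nonneg_of_le (fun s => norm_nonneg _) (fun s => ?_)
      ((ha.mul_left (‖S‖ * C)))
    calc ‖(a (s + h.toNat)).comp (S.comp (ContinuousLinearMap.adjoint (a s)))‖
        ≤ ‖S‖ * ‖a (s + h.toNat)‖ * ‖a s‖ := hterm_bound _ _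
      _ ≤ ‖S‖ * C * ‖a s‖ := by
          have := hbound (s + h.toNat)
          gcongr
  have part3 : ∀ h : ℤ, h < 0 →
      Summable fun s : ℕ =>
        ‖(a s).comp (S.comp (ContinuousLinearMap.adjoint (a (s + (-h).toNat))))‖ := by
    intro h _
    refine Summable.of_nonneg_of_le (fun s => norm_nonneg _) (fun s => ?_)
      ((ha.mul_left (‖S‖ * C)))
    calc ‖(a s).comp (S.comp (ContinuousLinearMap.adjoint (a (s + (-h).toNat))))‖
        ≤ ‖S‖ * ‖a s‖ * ‖a (s + (-h).toNat)‖ := hterm_bound _ _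
      _ ≤ ‖S‖ * ‖a s‖ * C := by
          have h1 := hbound (s + (-h).toNat)
          gcongr
      _ = ‖S‖ * C * ‖a s‖ := by ring
  -- Part 4
  have hF : Summable (fun p : ℕ × ℕ => ‖S‖ * ‖a (p.2 + p.1)‖ * ‖a p.2‖) := by
    have hG : Summable (fun q : ℕ × ℕ => ‖S‖ * ‖a q.1‖ * ‖a q.2‖) := by
      have := (ha.mul_left ‖S‖).mul_of_nonneg ha
        (fun t => mul_nonneg (norm_nonneg S) (norm_nonneg _)) (fun t => norm_nonneg _)
      simpa [mul_assoc] using this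
    have he : Function.Injective (fun p : ℕ × ℕ => ((p.2 + p.1, p.2) : ℕ × ℕ)) := by
      rintro ⟨n, s⟩ ⟨n', s'⟩ hp
      simp only [Prod.mk.injEq] at hp ⊢
      omega
    have hF' : Summable ((fun q : ℕ × ℕ => ‖S‖ * ‖a q.1‖ * ‖a q.2‖) ∘
        (fun p : ℕ × ℕ => ((p.2 + p.1, p.2) : ℕ × ℕ))) := hG.comp_injective he
    exact hF'
  have hFnonneg : ∀ p : ℕ × ℕ, 0 ≤ ‖S‖ * ‖a (p.2 + p.1)‖ * ‖a p.2‖ := fun p =>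
    mul_nonneg (mul_nonneg (norm_nonneg _) (norm_nonneg _)) (norm_nonneg _)
  have hFfiber : ∀ n : ℕ, Summable fun s : ℕ => ‖S‖ * ‖a (s + n)‖ * ‖a s‖ :=
    fun n => ((summable_prod_of_nonneg hFnonneg).mp hF).1 n
  have hg2 : Summable fun n : ℕ => ∑' s : ℕ, ‖S‖ * ‖a (s + n)‖ * ‖a s‖ :=
    ((summable_prod_of_nonneg hFnonneg).mp hF).2
  have hRposN : ∀ n : ℕ, ‖R (n : ℤ)‖ ≤ ∑' s : ℕ, ‖S‖ * ‖a (s + n)‖ * ‖a s‖ := by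
    intro n
    have hs := hRpos (n : ℤ) (Int.natCast_nonneg n)
    have hsn : Summable fun s : ℕ =>
        ‖(a (s + (n:ℤ).toNat)).comp (S.comp (ContinuousLinearMap.adjoint (a s)))‖ :=
      part2 (n : ℤ) (Int.natCast_nonneg n)
    calc ‖R (n : ℤ)‖ = ‖∑' s : ℕ, (a (s + (n:ℤ).toNat)).comp
          (S.comp (ContinuousLinearMap.adjoint (a s)))‖ := by rw [hs.tsum_eq]
      _ ≤ ∑' s : ℕ, ‖(a (s + (n:ℤ).toNat)).comp
          (S.comp (ContinuousLinearMap.adjoint (a s)))‖ := norm_tsum_le_tsum_norm hsn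
      _ ≤ ∑' s : ℕ, ‖S‖ * ‖a (s + n)‖ * ‖a s‖ := by
          refine Summable.tsum_le_tsum (fun s => ?_) hsn (hFfiber n)
          simpa using hterm_bound (s + (n:ℤ).toNat) s
  have hRnegN : ∀ n : ℕ, ‖R (-(n : ℤ))‖ ≤ ∑' s : ℕ, ‖S‖ * ‖a (s + n)‖ * ‖a s‖ := by
    intro n
    rcases Nat.eq_zero_or_pos n with hn | hn
    · subst hn; simpa using hRposN 0
    · have hneg : (-(n:ℤ)) < 0 := by omega
      have hs := hRneg (-(n:ℤ)) hneg
      have hsn : Summable fun s : ℕ =>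
          ‖(a s).comp (S.comp (ContinuousLinearMap.adjoint (a (s + (-(-(n:ℤ))).toNat))))‖ :=
        part3 _ hneg
      calc ‖R (-(n:ℤ))‖ = ‖∑' s : ℕ, (a s).comp
            (S.comp (ContinuousLinearMap.adjoint (a (s + (-(-(n:ℤ))).toNat))))‖ := by
            rw [hs.tsum_eq]
        _ ≤ ∑' s : ℕ, ‖(a s).comp
            (S.comp (ContinuousLinearMap.adjoint (a (s + (-(-(n:ℤ))).toNat))))‖ :=
            norm_tsum_le_tsum_norm hsn
        _ ≤ ∑' s : ℕ, ‖S‖ * ‖a (s + n)‖ * ‖a s‖ := by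
            refine Summable.tsum_le_tsum (fun s => ?_) hsn (hFfiber n)
            have := hterm_bound s (s + (-(-(n:ℤ))).toNat)
            simp only [neg_neg, Int.toNat_natCast] at this ⊢
            calc ‖(a s).comp (S.comp (ContinuousLinearMap.adjoint (a (s + n))))‖
                ≤ ‖S‖ * ‖a s‖ * ‖a (s + n)‖ := this
              _ = ‖S‖ * ‖a (s + n)‖ * ‖a s‖ := by ring
  have part4 : Summable (fun h : ℤ => ‖R h‖) := by
    refine Summable.of_nat_of_neg ?_ ?_
    · exact Summable.of_nonneg_of_le (fun n => norm_nonneg _) hRposN hg2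
    · exact Summable.of_nonneg_of_le (fun n => norm_nonneg _) hRnegN hg2
  -- Continuity of A
  have hAeq : A = fun ω : ℝ => ∑' s : ℕ, Complex.exp (-(Complex.I * s * ω)) • a s :=
    funext fun ω => ((hA ω).tsum_eq).symm
  have hAc : Continuous A := by
    rw [hAeq]
    refine continuous_tsum (fun s => ?_) ha (fun s ω => ?_)
    · exact (Complex.continuous_exp.comp (by fun_prop)).smul continuous_const
    · rw [norm_smul, norm_exp_nat, one_mul]
  have hadjc : Continuous fun ω => ContinuousLinearMap.adjoint (A ω) :=
    ((ContinuousLinearMap.adjoint : (H →L[ℂ] H) ≃ₗᵢ⋆[ℂ] (H →L[ℂ] H)).continuous).comp hAc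
  refine ⟨part1, part2, part3, part4, fun h => ?_⟩
  have hFc : Continuous fun ω : ℝ => Complex.exp (Complex.I * h * ω) •
      ((A ω).comp (S.comp (ContinuousLinearMap.adjoint (A ω)))) :=
    (Complex.continuous_exp.comp (by fun_prop)).smul
      (hAc.clm_comp (continuous_const.clm_comp hadjc))
  refine ⟨hFc.continuousOn, hFc.integrableOn_Icc, ?_⟩
  -- Notation
  set c : ℕ × ℕ → (H →L[ℂ] H) :=
    fun p => (a p.2).comp (S.comp (ContinuousLinearMap.adjoint (a p.1))) with hcdef
  set term : ℕ × ℕ → ℝ → (H →L[ℂ] H) :=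
    fun p ω => Complex.exp (Complex.I * ((h + p.1 - p.2 : ℤ) : ℂ) * ω) • c p with htermdef
  have hcbound : ∀ p : ℕ × ℕ, ‖c p‖ ≤ ‖a p.1‖ * (‖S‖ * ‖a p.2‖) := by
    intro p
    calc ‖c p‖ ≤ ‖S‖ * ‖a p.2‖ * ‖a p.1‖ := hterm_bound _ _
      _ = ‖a p.1‖ * (‖S‖ * ‖a p.2‖) := by ring
  have hcs : Summable fun p : ℕ × ℕ => ‖c p‖ :=
    Summable.of_nonneg_of_le (fun p => norm_nonneg _) hcbound
      (ha.mul_of_nonneg (ha.mul_left ‖S‖) (fun _ => norm_nonneg _)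
        (fun s => mul_nonneg (norm_nonneg _) (norm_nonneg _)))
  have hnormterm : ∀ (p : ℕ × ℕ) (ω : ℝ), ‖term p ω‖ = ‖c p‖ := by
    intro p ω
    rw [htermdef]
    rw [norm_smul, norm_exp_int, one_mul]
  -- pointwise double sum identity
  have hkey : ∀ ω : ℝ, HasSum (fun p : ℕ × ℕ => term p ω)
      (Complex.exp (Complex.I * h * ω) •
        ((A ω).comp (S.comp (ContinuousLinearMap.adjoint (A ω))))) := by
    intro ω
    have hsummable : Summable fun p : ℕ × ℕ => term p ω := by
      apply Summable.of_norm
      have : (fun p : ℕ × ℕ => ‖term p ω‖) = fun p => ‖c p‖ := funext fun p => hnormterm p ω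
      rw [this]; exact hcs
    have hfiber : ∀ t : ℕ, HasSum (fun s : ℕ => term (t, s) ω)
        (Complex.exp (Complex.I * ((h + t : ℤ) : ℂ) * ω) •
          ((A ω).comp (S.comp (ContinuousLinearMap.adjoint (a t))))) := by
      intro t
      have hm := (((ContinuousLinearMap.compL ℂ H H H).flip
          (S.comp (ContinuousLinearMap.adjoint (a t)))).hasSum (hA ω)).const_smul
          (Complex.exp (Complex.I * ((h + t : ℤ) : ℂ) * ω))
      have hfun : (fun s : ℕ => Complex.exp (Complex.I * ((h + t : ℤ) : ℂ) * ω) •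
          ((ContinuousLinearMap.compL ℂ H H H).flip
            (S.comp (ContinuousLinearMap.adjoint (a t)))
            (Complex.exp (-(Complex.I * s * ω)) • a s))) = fun s => term (t, s) ω := by
        funext s
        rw [htermdef, hcdef]
        simp only [ContinuousLinearMap.flip_apply, ContinuousLinearMap.compL_apply,
          ContinuousLinearMap.smul_comp, smul_smul, ← Complex.exp_add]
        congr 2
        push_cast
        ring
      have htgt : Complex.exp (Complex.I * ((h + t : ℤ) : ℂ) * ω) •
          ((ContinuousLinearMap.compL ℂ H H H).flip
            (S.comp (ContinuousLinearMap.adjoint (a t))) (A ω)) =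
          Complex.exp (Complex.I * ((h + t : ℤ) : ℂ) * ω) •
          ((A ω).comp (S.comp (ContinuousLinearMap.adjoint (a t)))) := rfl
      rw [hfun, htgt] at hm
      exact hm
    have hadjsum : HasSum (fun t : ℕ => Complex.exp (Complex.I * t * ω) •
        ContinuousLinearMap.adjoint (a t)) (ContinuousLinearMap.adjoint (A ω)) := by
      have hm := (hA ω).map
        (ContinuousLinearMap.adjoint : (H →L[ℂ] H) ≃ₗᵢ⋆[ℂ] (H →L[ℂ] H))
        (LinearIsometryEquiv.continuous _)
      have hfun : (fun t : ℕ => ContinuousLinearMap.adjoint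
          (Complex.exp (-(Complex.I * t * ω)) • a t)) =
          fun t : ℕ => Complex.exp (Complex.I * t * ω) • ContinuousLinearMap.adjoint (a t) := by
        funext t
        have hconj : (starRingEnd ℂ) (Complex.exp (-(Complex.I * t * ω)))
            = Complex.exp (Complex.I * t * ω) := by
          rw [← Complex.exp_conj]; congr 1; simp
        have hadjsmul : ∀ (z : ℂ) (T : H →L[ℂ] H), ContinuousLinearMap.adjoint (z • T)
            = (starRingEnd ℂ z) • ContinuousLinearMap.adjoint T := fun z T =>
          map_smulₛₗ (ContinuousLinearMap.adjoint : (H →L[ℂ] H) ≃ₗᵢ⋆[ℂ] (H →L[ℂ] H)) z T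
        rw [hadjsmul, hconj]
      simp only [Function.comp_def] at hm
      rw [hfun] at hm
      exact hm
    have hmid := ((ContinuousLinearMap.compL ℂ H H H (A ω)).comp
      (ContinuousLinearMap.compL ℂ H H H S)).hasSum hadjsum
    have houter := hmid.const_smul (Complex.exp (Complex.I * h * ω))
    have hfun2 : (fun t : ℕ => Complex.exp (Complex.I * h * ω) •
        (((ContinuousLinearMap.compL ℂ H H H (A ω)).comp
          (ContinuousLinearMap.compL ℂ H H H S))
          (Complex.exp (Complex.I * t * ω) • ContinuousLinearMap.adjoint (a t)))) =
        fun t : ℕ => Complex.exp (Complex.I * ((h + t : ℤ) : ℂ) * ω) •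
          ((A ω).comp (S.comp (ContinuousLinearMap.adjoint (a t)))) := by
      funext t
      simp only [ContinuousLinearMap.coe_comp', Function.comp_apply,
        ContinuousLinearMap.compL_apply, _root_.map_smul, smul_smul, ← Complex.exp_add]
      congr 2
      push_cast
      ring
    rw [hfun2] at houter
    have h1 : HasSum (fun t : ℕ => Complex.exp (Complex.I * ((h + t : ℤ) : ℂ) * ω) •
        ((A ω).comp (S.comp (ContinuousLinearMap.adjoint (a t)))))
        (∑' p : ℕ × ℕ, term p ω) := hsummable.hasSum.prod_fiberwise hfiber
    have h2 : (∑' p : ℕ × ℕ, term p ω) = Complex.exp (Complex.I * h * ω) •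
        ((A ω).comp (S.comp (ContinuousLinearMap.adjoint (A ω)))) := h1.unique houter
    exact h2 ▸ hsummable.hasSum
  -- integrate term by term
  have hint : ∀ p : ℕ × ℕ, Integrable (term p) (volume.restrict (Set.Icc (0:ℝ) (2*π))) := by
    intro p
    rw [htermdef]
    exact ((Complex.continuous_exp.comp (by fun_prop)).smul
      continuous_const).integrableOn_Icc
  have hintn : Summable fun p : ℕ × ℕ =>
      ∫ ω in Set.Icc (0:ℝ) (2*π), ‖term p ω‖ ∂volume := by
    have heq : (fun p : ℕ × ℕ => ∫ ω in Set.Icc (0:ℝ) (2*π), ‖term p ω‖ ∂volume)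
        = fun p => (2*π) * ‖c p‖ := by
      funext p
      have : (fun ω : ℝ => ‖term p ω‖) = fun _ => ‖c p‖ := funext fun ω => hnormterm p ω
      rw [this, setIntegral_const, measureReal_def, Real.volume_Icc, smul_eq_mul, sub_zero,
        ENNReal.toReal_ofReal Real.two_pi_pos.le]
    rw [heq]
    exact hcs.mul_left _
  have hswap := integral_tsum_of_summable_integral_norm
    (μ := volume.restrict (Set.Icc (0:ℝ) (2*π))) hint hintn
  have hival : (∫ ω in Set.Icc (0:ℝ) (2*π), Complex.exp (Complex.I * h * ω) •
      ((A ω).comp (S.comp (ContinuousLinearMap.adjoint (A ω)))) ∂volume)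
      = ∑' p : ℕ × ℕ, ∫ ω in Set.Icc (0:ℝ) (2*π), term p ω ∂volume := by
    rw [hswap]
    refine setIntegral_congr_fun measurableSet_Icc (fun ω _ => ?_)
    exact ((hkey ω).tsum_eq).symm
  have heval : ∀ p : ℕ × ℕ, (∫ ω in Set.Icc (0:ℝ) (2*π), term p ω ∂volume)
      = (if (h + p.1 - p.2 : ℤ) = 0 then ((2*π:ℝ):ℂ) else 0) • c p := by
    intro p
    rw [htermdef]
    rw [integral_smul_const, scalar_int]
  have hival2 : (∫ ω in Set.Icc (0:ℝ) (2*π), Complex.exp (Complex.I * h * ω) •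
      ((A ω).comp (S.comp (ContinuousLinearMap.adjoint (A ω)))) ∂volume)
      = ∑' p : ℕ × ℕ, (if (h + p.1 - p.2 : ℤ) = 0 then ((2*π:ℝ):ℂ) else 0) • c p := by
    rw [hival]
    exact tsum_congr heval
  -- evaluate the diagonal sum
  have hdiag : (∑' p : ℕ × ℕ, (if (h + p.1 - p.2 : ℤ) = 0 then ((2*π:ℝ):ℂ) else 0) • c p)
      = ((2*π:ℝ):ℂ) • R h := by
    rcases le_or_gt 0 h with hh | hh
    · have hg : Function.Injective (fun t : ℕ => ((t, t + h.toNat) : ℕ × ℕ)) := by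
        intro t t' htt
        simpa using (Prod.mk.injEq _ _ _ _ ▸ htt).1
      have hsupp : Function.support
          (fun p : ℕ × ℕ => (if (h + p.1 - p.2 : ℤ) = 0 then ((2*π:ℝ):ℂ) else 0) • c p)
          ⊆ Set.range (fun t : ℕ => ((t, t + h.toNat) : ℕ × ℕ)) := by
        intro p hp
        rcases eq_or_ne (h + p.1 - p.2 : ℤ) 0 with hk | hk
        · refine ⟨p.1, ?_⟩
          have : p.2 = p.1 + h.toNat := by omega
          simp [← this]
        · simp [hk] at hp
      have := hg.tsum_eq (f := fun p : ℕ × ℕ =>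
        (if (h + p.1 - p.2 : ℤ) = 0 then ((2*π:ℝ):ℂ) else 0) • c p) hsupp
      rw [← this]
      have hcond : ∀ t : ℕ, (h + (t:ℤ) - ((t + h.toNat : ℕ) : ℤ)) = 0 := by
        intro t; push_cast; omega
      have hfin : (fun t : ℕ =>
          (if (h + (t:ℤ) - ((t + h.toNat : ℕ) : ℤ)) = 0 then ((2*π:ℝ):ℂ) else 0) •
            c (t, t + h.toNat)) = fun t : ℕ => ((2*π:ℝ):ℂ) •
            ((a (t + h.toNat)).comp (S.comp (ContinuousLinearMap.adjoint (a t)))) := by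
        funext t
        rw [hcdef]
        rw [if_pos (hcond t)]
      rw [hfin]
      exact ((hRpos h hh).const_smul (((2*π:ℝ):ℂ))).tsum_eq
    · have hg : Function.Injective (fun s : ℕ => ((s + (-h).toNat, s) : ℕ × ℕ)) := by
        intro t t' htt
        simpa using (Prod.mk.injEq _ _ _ _ ▸ htt).2
      have hsupp : Function.support
          (fun p : ℕ × ℕ => (if (h + p.1 - p.2 : ℤ) = 0 then ((2*π:ℝ):ℂ) else 0) • c p)
          ⊆ Set.range (fun s : ℕ => ((s + (-h).toNat, s) : ℕ × ℕ)) := by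
        intro p hp
        rcases eq_or_ne (h + p.1 - p.2 : ℤ) 0 with hk | hk
        · refine ⟨p.2, ?_⟩
          have : p.1 = p.2 + (-h).toNat := by omega
          simp [← this]
        · simp [hk] at hp
      have := hg.tsum_eq (f := fun p : ℕ × ℕ =>
        (if (h + p.1 - p.2 : ℤ) = 0 then ((2*π:ℝ):ℂ) else 0) • c p) hsupp
      rw [← this]
      have hcond : ∀ s : ℕ, (h + ((s + (-h).toNat : ℕ) : ℤ) - (s:ℤ)) = 0 := by
        intro s; push_cast; omega
      have hfin : (fun s : ℕ =>
          (if (h + ((s + (-h).toNat : ℕ) : ℤ) - (s:ℤ)) = 0 then ((2*π:ℝ):ℂ) else 0) •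
            c (s + (-h).toNat, s)) = fun s : ℕ => ((2*π:ℝ):ℂ) •
            ((a s).comp (S.comp (ContinuousLinearMap.adjoint (a (s + (-h).toNat))))) := by
        funext s
        rw [hcdef]
        rw [if_pos (hcond s)]
      rw [hfin]
      exact ((hRneg h hh).const_smul (((2*π:ℝ):ℂ))).tsum_eq
  rw [hival2, hdiag, ← smul_assoc]
  have : ((2*π:ℝ)⁻¹ : ℝ) • (((2*π:ℝ):ℂ)) = (1:ℂ) := by
    rw [Complex.real_smul]
    push_cast
    field_simp [Real.pi_ne_zero]
  rw [this, one_smul]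
end

section
/- Let d ∈ (−1/2, 1/2) with d ≠ 0, and let c_k := Γ(k+d) / (Γ(d) · Γ(k+1)) for k ∈ ℕ be the fractional-integration coefficients. Then for every ω ∈ (0, 2π), the partial sums Σ_{k=0}^{N} c_k e^{−ikω} converge, as N → ∞, to (1 − e^{−iω})^{−d}, where z^{−d} denotes the principal branch of the complex power. -/
open Real Filter Complex

private lemma aux_tsum_eq (d : ℝ) (c : ℕ → ℝ) (hc0 : c 0 = 1)
    (hrec : ∀ k : ℕ, ((k : ℝ) + 1) * c (k + 1) = ((k : ℝ) + d) * c k)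
    {B : ℝ} (hB : ∀ n, |c n| ≤ B)
    {w : ℂ} (hw : ‖w‖ < 1) :
    ∑' n : ℕ, (c n : ℂ) * w ^ n = (1 - w) ^ (-(d : ℂ)) := by
  have hB0 : 0 ≤ B := le_trans (abs_nonneg _) (hB 0)
  set ρ : ℝ := (1 + ‖w‖) / 2 with hρ
  have hρ0 : 0 < ρ := by positivity
  have hρ1 : ρ < 1 := by rw [hρ]; linarith
  have hwρ : ‖w‖ < ρ := by rw [hρ]; linarith [norm_nonneg w]
  set t : Set ℂ := Metric.ball (0 : ℂ) ρ with ht_def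
  have ht : IsOpen t := Metric.isOpen_ball
  have htc : Convex ℝ t := convex_ball 0 ρ
  have hmem : ∀ {y : ℂ}, y ∈ t ↔ ‖y‖ < ρ := by
    intro y; rw [ht_def, Metric.mem_ball, dist_zero_right]
  have h0t : (0 : ℂ) ∈ t := hmem.mpr (by simpa using hρ0)
  have hwt : w ∈ t := hmem.mpr hwρ
  -- summable bound for the derivative series
  have hρn : ‖(ρ : ℝ)‖ < 1 := by rwa [Real.norm_eq_abs, abs_of_pos hρ0]
  have hu1 : Summable (fun n : ℕ => ((n : ℝ) + 1) * ρ ^ n) := by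
    have h1 := summable_pow_mul_geometric_of_norm_lt_one (R := ℝ) 1 hρn
    have h2 : Summable (fun n : ℕ => ρ ^ n) := summable_geometric_of_lt_one hρ0.le hρ1
    exact (h1.add h2).congr fun n => by push_cast; ring
  have husum : Summable (fun n : ℕ => (n : ℝ) * ρ ^ (n - 1)) := by
    refine (summable_nat_add_iff 1).mp ?_
    exact hu1.congr fun n => by simp only [Nat.add_sub_cancel]; push_cast; ring
  have hu : Summable (fun n : ℕ => B * ((n : ℝ) * ρ ^ (n - 1))) := husum.mul_left B
  -- termwise derivatives
  have hg : ∀ (n : ℕ), ∀ y ∈ t, HasDerivAt (fun x : ℂ => (c n : ℂ) * x ^ n)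
      ((c n : ℂ) * ((n : ℂ) * y ^ (n - 1))) y := fun n y _ =>
    (hasDerivAt_pow n y).const_mul _
  have hg' : ∀ (n : ℕ), ∀ y ∈ t,
      ‖(c n : ℂ) * ((n : ℂ) * y ^ (n - 1))‖ ≤ B * ((n : ℝ) * ρ ^ (n - 1)) := by
    intro n y hy
    have hyρ : ‖y‖ ≤ ρ := (hmem.mp hy).le
    rw [norm_mul, norm_mul, norm_pow, Complex.norm_real, Complex.norm_natCast,
      Real.norm_eq_abs]
    gcongr
    exact hB n
  have hg0 : Summable (fun n : ℕ => (c n : ℂ) * (0 : ℂ) ^ n) := by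
    apply summable_of_ne_finset_zero (s := ({0} : Finset ℕ))
    intro n hn
    rw [Finset.mem_singleton] at hn
    simp [zero_pow hn]
  have hderiv : ∀ y ∈ t, HasDerivAt (fun x : ℂ => ∑' n : ℕ, (c n : ℂ) * x ^ n)
      (∑' n : ℕ, (c n : ℂ) * ((n : ℂ) * y ^ (n - 1))) y := fun y hy =>
    hasDerivAt_tsum_of_isPreconnected hu ht htc.isPreconnected hg hg' h0t hg0 hy
  -- summability facts inside the unit disc
  have S0 : ∀ {y : ℂ}, ‖y‖ < 1 → Summable (fun n : ℕ => (c n : ℂ) * y ^ n) := by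
    intro y hy
    refine Summable.of_norm_bounded
      ((summable_geometric_of_lt_one (norm_nonneg _) hy).mul_left B) fun n => ?_
    rw [norm_mul, norm_pow, Complex.norm_real, Real.norm_eq_abs]
    gcongr
    exact hB n
  have S2 : ∀ {y : ℂ}, ‖y‖ < 1 → Summable (fun n : ℕ => (n : ℂ) * (c n : ℂ) * y ^ n) := by
    intro y hy
    have hyn : ‖(‖y‖ : ℝ)‖ < 1 := by rwa [Real.norm_eq_abs, _root_.abs_of_nonneg (norm_nonneg _)]
    have h1 : Summable (fun n : ℕ => B * ((n : ℝ) ^ (1 : ℕ) * ‖y‖ ^ n)) :=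
      (summable_pow_mul_geometric_of_norm_lt_one 1 hyn).mul_left B
    refine Summable.of_norm_bounded h1 fun n => ?_
    rw [norm_mul, norm_mul, norm_pow, Complex.norm_natCast, Complex.norm_real,
      Real.norm_eq_abs]
    calc (n : ℝ) * |c n| * ‖y‖ ^ n ≤ (n : ℝ) * B * ‖y‖ ^ n := by
          gcongr; exact hB n
      _ = B * ((n : ℝ) ^ (1 : ℕ) * ‖y‖ ^ n) := by ring
  have S1 : ∀ {y : ℂ}, ‖y‖ < 1 → Summable (fun n : ℕ => ((n : ℂ) + d) * (c n : ℂ) * y ^ n) := by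
    intro y hy
    exact ((S2 hy).add ((S0 hy).mul_left (d : ℂ))).congr fun n => by ring
  have hcast : ∀ k : ℕ, ((k : ℂ) + 1) * (c (k + 1) : ℂ) = ((k : ℂ) + (d : ℂ)) * (c k : ℂ) := by
    intro k
    exact_mod_cast hrec k
  -- the ODE satisfied by the sum
  have key : ∀ y ∈ t, (1 - y) * (∑' n : ℕ, (c n : ℂ) * ((n : ℂ) * y ^ (n - 1)))
      = (d : ℂ) * ∑' n : ℕ, (c n : ℂ) * y ^ n := by
    intro y hy
    have hy1 : ‖y‖ < 1 := lt_trans (hmem.mp hy) hρ1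
    have SD : Summable (fun n : ℕ => (c n : ℂ) * ((n : ℂ) * y ^ (n - 1))) :=
      Summable.of_norm_bounded hu fun n => hg' n y hy
    have e1 : (∑' n : ℕ, (c n : ℂ) * ((n : ℂ) * y ^ (n - 1)))
        = ∑' n : ℕ, ((n : ℂ) + d) * (c n : ℂ) * y ^ n := by
      rw [Summable.tsum_eq_zero_add SD]
      simp only [Nat.cast_zero, zero_mul, mul_zero, zero_add]
      refine tsum_congr fun k => ?_
      rw [Nat.add_sub_cancel, show ((k + 1 : ℕ) : ℂ) = (k : ℂ) + 1 by push_cast; ring,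
        show (c (k + 1) : ℂ) * (((k : ℂ) + 1) * y ^ k)
          = (((k : ℂ) + 1) * (c (k + 1) : ℂ)) * y ^ k by ring, hcast k]
    have e2 : y * (∑' n : ℕ, (c n : ℂ) * ((n : ℂ) * y ^ (n - 1)))
        = ∑' n : ℕ, (n : ℂ) * (c n : ℂ) * y ^ n := by
      rw [e1, ← tsum_mul_left, Summable.tsum_eq_zero_add (S2 hy1)]
      simp only [Nat.cast_zero, zero_mul, zero_add]
      refine tsum_congr fun k => ?_
      rw [show ((k + 1 : ℕ) : ℂ) = (k : ℂ) + 1 by push_cast; ring,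
        show ((k : ℂ) + 1) * (c (k + 1) : ℂ) * y ^ (k + 1)
          = (((k : ℂ) + 1) * (c (k + 1) : ℂ)) * y ^ (k + 1) by ring, hcast k]
      ring
    rw [sub_mul, one_mul, e2, e1, ← Summable.tsum_sub (S1 hy1) (S2 hy1), ← tsum_mul_left]
    exact tsum_congr fun n => by ring
  -- slit plane facts
  have hslit : ∀ y ∈ t, (1 : ℂ) - y ∈ slitPlane := by
    intro y hy
    have hy1 : ‖y‖ < 1 := lt_trans (hmem.mp hy) hρ1
    rw [mem_slitPlane_iff]
    left
    have hre : |y.re| < 1 := lt_of_le_of_lt (Complex.abs_re_le_norm y)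
      (by exact hy1)
    simp only [Complex.sub_re, Complex.one_re]
    have := (abs_lt.mp hre).2
    linarith
  -- the function (1-x)^d * sum has zero derivative on t
  have hFd : ∀ y ∈ t, HasDerivAt
      (fun x : ℂ => (1 - x) ^ (d : ℂ) * ∑' n : ℕ, (c n : ℂ) * x ^ n) 0 y := by
    intro y hy
    have h1y : (1 : ℂ) - y ≠ 0 := slitPlane_ne_zero (hslit y hy)
    have hpow : HasDerivAt (fun x : ℂ => (1 - x) ^ (d : ℂ))
        ((d : ℂ) * (1 - y) ^ ((d : ℂ) - 1) * (-1)) y :=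
      HasDerivAt.cpow_const ((hasDerivAt_id y).const_sub 1) (hslit y hy)
    have hmul := hpow.mul (hderiv y hy)
    have hzero : (d : ℂ) * (1 - y) ^ ((d : ℂ) - 1) * (-1) * (∑' n : ℕ, (c n : ℂ) * y ^ n)
        + (1 - y) ^ (d : ℂ) * (∑' n : ℕ, (c n : ℂ) * ((n : ℂ) * y ^ (n - 1))) = 0 := by
      have hsplit : (1 - y) ^ (d : ℂ) = (1 - y) ^ ((d : ℂ) - 1) * (1 - y) := by
        conv_lhs => rw [show (d : ℂ) = ((d : ℂ) - 1) + 1 by ring]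
        rw [cpow_add _ _ h1y, cpow_one]
      rw [hsplit]
      linear_combination ((1 - y) ^ ((d : ℂ) - 1)) * (key y hy)
    rw [← hzero]
    exact hmul
  -- constancy on the convex set t
  have hF0 : ∀ y ∈ t, HasFDerivWithinAt
      (fun x : ℂ => (1 - x) ^ (d : ℂ) * ∑' n : ℕ, (c n : ℂ) * x ^ n)
      ((0 : ℂ →L[ℝ] ℂ)) t y := by
    intro y hy
    have h := hasDerivAt_iff_hasFDerivAt.mp (hFd y hy)
    have h2 := h.restrictScalars ℝ
    have h3 : (ContinuousLinearMap.toSpanSingleton ℂ (0 : ℂ)).restrictScalars ℝ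
        = (0 : ℂ →L[ℝ] ℂ) := by
      ext x
      simp
    rw [h3] at h2
    exact h2.hasFDerivWithinAt
  have hcon := Convex.norm_image_sub_le_of_norm_hasFDerivWithin_le (C := 0) hF0
    (fun y _ => by simp) htc h0t hwt
  rw [zero_mul] at hcon
  have hFw : (1 - w) ^ (d : ℂ) * (∑' n : ℕ, (c n : ℂ) * w ^ n)
      = (1 - 0) ^ (d : ℂ) * (∑' n : ℕ, (c n : ℂ) * (0 : ℂ) ^ n) :=
    sub_eq_zero.mp (norm_le_zero_iff.mp hcon)
  have h00 : (∑' n : ℕ, (c n : ℂ) * (0 : ℂ) ^ n) = 1 := by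
    rw [tsum_eq_single 0 (fun n hn => by simp [zero_pow hn])]
    simp [hc0]
  rw [h00, sub_zero, one_cpow, mul_one] at hFw
  rw [cpow_neg]
  exact eq_inv_of_mul_eq_one_right hFw

/-- For `d ∈ (-1/2,1/2)`, `d ≠ 0`, and `ω ∈ (0,2π)`, the partial sums of the
fractional-integration series `Σ_{k=0}^N c_k e^{-ikω}`, with `c_k = Γ(k+d)/(Γ(d)Γ(k+1))`,
converge to `(1 - e^{-iω})^{-d}` (principal branch of the complex power). -/
theorem fractional_integration_frequency_response
    (d : ℝ) (hd : d ∈ Set.Ioo (-(1/2) : ℝ) (1/2)) (hd0 : d ≠ 0)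
    (c : ℕ → ℝ)
    (hc : ∀ k : ℕ, c k = Real.Gamma (k + d) / (Real.Gamma d * Real.Gamma (k + 1)))
    (ω : ℝ) (hω : ω ∈ Set.Ioo (0 : ℝ) (2 * π)) :
    Tendsto
      (fun N : ℕ => ∑ k ∈ Finset.range (N + 1),
        (c k : ℂ) * Complex.exp (-(Complex.I * k * ω)))
      atTop
      (nhds ((1 - Complex.exp (-(Complex.I * ω))) ^ (-(d : ℂ)))) := by
  obtain ⟨hd1, hd2⟩ := hd
  obtain ⟨hω1, hω2⟩ := hω
  set z : ℂ := Complex.exp (-(Complex.I * ω)) with hz_def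
  -- basic facts about z
  have hz_norm : ‖z‖ = 1 := by
    rw [hz_def, Complex.norm_exp]
    simp
  have hzre : z.re = Real.cos ω := by
    rw [hz_def, Complex.exp_re]
    simp
  have hcos : Real.cos ω < 1 := by
    have hne : Real.cos ω ≠ 1 := by
      intro h
      rw [Real.cos_eq_one_iff_of_lt_of_lt (by linarith [Real.pi_pos]) hω2] at h
      exact ne_of_gt hω1 h
    exact lt_of_le_of_ne (Real.cos_le_one ω) hne
  have hre : 0 < ((1 : ℂ) - z).re := by
    simp only [Complex.sub_re, Complex.one_re, hzre]
    linarith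
  have hslit : (1 : ℂ) - z ∈ slitPlane := mem_slitPlane_iff.mpr (Or.inl hre)
  have hz1 : z ≠ 1 := by
    intro h
    rw [h] at hzre
    simp only [Complex.one_re] at hzre
    linarith [hzre.symm]
  -- Gamma facts
  have hdj : ∀ j : ℕ, d + (j : ℝ) ≠ 0 := by
    intro j
    rcases Nat.eq_zero_or_pos j with hj | hj
    · simpa [hj] using hd0
    · have : (1 : ℝ) ≤ j := by exact_mod_cast hj
      exact ne_of_gt (by linarith)
  have hΓd : Real.Gamma d ≠ 0 := by
    apply Real.Gamma_ne_zero
    intro m hm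
    rcases Nat.eq_zero_or_pos m with h0 | h0
    · rw [h0] at hm; simp at hm; exact hd0 hm
    · have : (1 : ℝ) ≤ m := by exact_mod_cast h0
      rw [hm] at hd1
      linarith
  -- the recurrence
  have hrec : ∀ k : ℕ, ((k : ℝ) + 1) * c (k + 1) = ((k : ℝ) + d) * c k := by
    intro k
    have hkd : (k : ℝ) + d ≠ 0 := by
      have := hdj k
      intro h; apply this; linarith
    have hk1 : (k : ℝ) + 1 ≠ 0 := by positivity
    have hΓk1 : Real.Gamma ((k : ℝ) + 1) ≠ 0 :=
      ne_of_gt (Real.Gamma_pos_of_pos (by positivity))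
    rw [hc (k + 1), hc k,
      show ((k + 1 : ℕ) : ℝ) + d = ((k : ℝ) + d) + 1 by push_cast; ring,
      Real.Gamma_add_one hkd,
      show ((k + 1 : ℕ) : ℝ) + 1 = ((k : ℝ) + 1) + 1 by push_cast; ring,
      Real.Gamma_add_one hk1]
    field_simp
  have hc0 : c 0 = 1 := by
    rw [hc 0]
    simp only [Nat.cast_zero, zero_add]
    rw [Real.Gamma_one]
    field_simp
  -- product formula
  have hprodf : ∀ n : ℕ, (n.factorial : ℝ) * c n = ∏ j ∈ Finset.range n, (d + (j : ℝ)) := by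
    intro n
    induction n with
    | zero => simp [hc0]
    | succ n ih =>
      rw [Finset.prod_range_succ, ← ih]
      have h := hrec n
      push_cast [Nat.factorial_succ]
      nlinarith [h]
  -- link with GammaSeq
  have hP : ∀ n : ℕ, (∏ j ∈ Finset.range n, (d + (j : ℝ))) ≠ 0 := fun n =>
    Finset.prod_ne_zero_iff.mpr fun j _ => hdj j
  have hkey : ∀ n : ℕ, 1 ≤ n → c (n + 1) * Real.GammaSeq d n = (n : ℝ) ^ d / ((n : ℝ) + 1) := by
    intro n hn
    have hfac : (0 : ℝ) < n.factorial := by exact_mod_cast n.factorial_pos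
    have hn1 : (0 : ℝ) < (n : ℝ) + 1 := by positivity
    have hprod' := hprodf (n + 1)
    push_cast [Nat.factorial_succ] at hprod'
    rw [Real.GammaSeq]
    field_simp [hP (n + 1), hn1.ne', hfac.ne']
    linear_combination hprod'
  have hGSne : ∀ n : ℕ, 1 ≤ n → Real.GammaSeq d n ≠ 0 := by
    intro n hn
    have hn0 : (0 : ℝ) < (n : ℝ) := by exact_mod_cast hn
    rw [Real.GammaSeq]
    have h1 : (0 : ℝ) < (n : ℝ) ^ d := Real.rpow_pos_of_pos hn0 d
    have h2 : (0 : ℝ) < n.factorial := by exact_mod_cast n.factorial_pos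
    exact div_ne_zero (by positivity) (hP (n + 1))
  -- c tends to zero
  have hnum : Tendsto (fun n : ℕ => (n : ℝ) ^ d / ((n : ℝ) + 1)) atTop (nhds 0) := by
    have hupper : Tendsto (fun n : ℕ => (n : ℝ) ^ (d - 1)) atTop (nhds 0) := by
      have := (tendsto_rpow_neg_atTop (by linarith : (0 : ℝ) < 1 - d)).comp
        (tendsto_natCast_atTop_atTop (R := ℝ))
      simpa [neg_sub, Function.comp_def] using this
    apply tendsto_of_tendsto_of_tendsto_of_le_of_le' tendsto_const_nhds hupper
    · filter_upwards with n
      positivity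
    · filter_upwards [eventually_ge_atTop 1] with n hn
      have hn0 : (0 : ℝ) < (n : ℝ) := by exact_mod_cast hn
      have h1 : (n : ℝ) ^ d / ((n : ℝ) + 1) ≤ (n : ℝ) ^ d / (n : ℝ) := by
        gcongr
        linarith
      calc (n : ℝ) ^ d / ((n : ℝ) + 1) ≤ (n : ℝ) ^ d / (n : ℝ) := h1
        _ = (n : ℝ) ^ (d - 1) := by
            rw [Real.rpow_sub hn0, Real.rpow_one]
  have hc_tendsto : Tendsto c atTop (nhds 0) := by
    rw [← tendsto_add_atTop_iff_nat 1]
    have h1 : Tendsto (fun n : ℕ => ((n : ℝ) ^ d / ((n : ℝ) + 1)) / Real.GammaSeq d n)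
        atTop (nhds 0) := by
      have := hnum.div (Real.GammaSeq_tendsto_Gamma d) hΓd
      rw [zero_div] at this
      exact this
    apply h1.congr'
    filter_upwards [eventually_ge_atTop 1] with n hn
    rw [eq_comm, eq_div_iff (hGSne n hn)]
    exact hkey n hn
  -- boundedness of c
  have hBd : ∃ B : ℝ, ∀ n, |c n| ≤ B := by
    obtain ⟨B, hB⟩ := (hc_tendsto.abs).bddAbove_range
    exact ⟨B, fun n => hB (Set.mem_range_self n)⟩
  obtain ⟨B, hB⟩ := hBd
  -- convergence of the partial sums on the boundary
  have hconv : ∃ L : ℂ, Tendsto (fun n : ℕ => ∑ i ∈ Finset.range n, (c i : ℂ) * z ^ i)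
      atTop (nhds L) := by
    rcases lt_or_gt_of_ne hd0 with hneg | hpos
    · -- d < 0 : absolute convergence
      have hGtend := Real.GammaSeq_tendsto_Gamma d
      have hev : ∀ᶠ n : ℕ in atTop, |Real.Gamma d| / 2 < |Real.GammaSeq d n| :=
        hGtend.abs.eventually (eventually_gt_nhds (by
          have : 0 < |Real.Gamma d| := abs_pos.mpr hΓd
          linarith))
      have hΓpos : (0 : ℝ) < |Real.Gamma d| := abs_pos.mpr hΓd
      have hsum1 : Summable (fun n : ℕ => 2 / |Real.Gamma d| * (n : ℝ) ^ (d - 1)) :=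
        (Real.summable_nat_rpow.mpr (by linarith)).mul_left _
      have hsum_abs' : Summable (fun n : ℕ => |c (n + 1)|) := by
        apply Summable.of_norm_bounded_eventually hsum1
        rw [Nat.cofinite_eq_atTop]
        filter_upwards [eventually_ge_atTop 1, hev] with n hn hGn
        have hn0 : (0 : ℝ) < (n : ℝ) := by exact_mod_cast hn
        have hGn0 : (0 : ℝ) < |Real.GammaSeq d n| := by linarith
        have hkeyn := hkey n hn
        have habs : |c (n + 1)| * |Real.GammaSeq d n| = (n : ℝ) ^ d / ((n : ℝ) + 1) := by
          rw [← abs_mul, hkeyn, _root_.abs_of_nonneg (by positivity)]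
        rw [Real.norm_eq_abs, _root_.abs_abs]
        have hle1 : |c (n + 1)| ≤ ((n : ℝ) ^ d / ((n : ℝ) + 1)) / (|Real.Gamma d| / 2) := by
          rw [le_div_iff₀ (by positivity)]
          calc |c (n + 1)| * (|Real.Gamma d| / 2) ≤ |c (n + 1)| * |Real.GammaSeq d n| := by
                gcongr
            _ = (n : ℝ) ^ d / ((n : ℝ) + 1) := habs
        have hle2 : ((n : ℝ) ^ d / ((n : ℝ) + 1)) / (|Real.Gamma d| / 2)
            ≤ 2 / |Real.Gamma d| * (n : ℝ) ^ (d - 1) := by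
          have h3 : ((n : ℝ) ^ d / ((n : ℝ) + 1)) / (|Real.Gamma d| / 2)
              = 2 / |Real.Gamma d| * ((n : ℝ) ^ d / ((n : ℝ) + 1)) := by
            field_simp
          rw [h3, Real.rpow_sub hn0, Real.rpow_one]
          gcongr
          linarith
        linarith
      have hsum : Summable (fun n : ℕ => (c n : ℂ) * z ^ n) := by
        apply Summable.of_norm
        have : Summable (fun n : ℕ => |c n|) := (summable_nat_add_iff 1).mp hsum_abs'
        apply this.congr
        intro n
        rw [norm_mul, norm_pow, hz_norm, one_pow, mul_one, Complex.norm_real,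
          Real.norm_eq_abs]
      exact ⟨_, hsum.hasSum.tendsto_sum_nat⟩
    · -- d > 0 : Dirichlet's test
      have hge : ∀ n, 0 ≤ c n := by
        intro n
        have hfac : (0 : ℝ) < n.factorial := by exact_mod_cast n.factorial_pos
        have hp : 0 ≤ ∏ j ∈ Finset.range n, (d + (j : ℝ)) :=
          Finset.prod_nonneg fun j _ => by positivity
        have h := hprodf n
        nlinarith
      have hant : Antitone c := by
        apply antitone_nat_of_succ_le
        intro n
        have h := hrec n
        have h1 := hge n
        have h2 : (0 : ℝ) < (n : ℝ) + 1 := by positivity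
        nlinarith
      have hz0 : (1 : ℂ) - z ≠ 0 := sub_ne_zero.mpr (Ne.symm hz1)
      have hb : ∀ n : ℕ, ‖∑ i ∈ Finset.range n, z ^ i‖ ≤ 2 / ‖(1 : ℂ) - z‖ := by
        intro n
        rw [geom_sum_eq hz1 n, norm_div, norm_sub_rev z 1]
        gcongr
        calc ‖z ^ n - 1‖ ≤ ‖z ^ n‖ + ‖(1 : ℂ)‖ := norm_sub_le _ _
          _ = 2 := by rw [norm_pow, hz_norm, one_pow, norm_one]; norm_num
      have hcau := hant.cauchySeq_series_mul_of_tendsto_zero_of_bounded hc_tendsto hb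
      obtain ⟨L, hL⟩ := cauchySeq_tendsto_of_complete hcau
      refine ⟨L, hL.congr fun n => Finset.sum_congr rfl fun i _ => ?_⟩
      rw [Complex.real_smul]
  obtain ⟨L, hL⟩ := hconv
  have hsum_id : ∀ w : ℂ, ‖w‖ < 1 → ∑' n : ℕ, (c n : ℂ) * w ^ n = (1 - w) ^ (-(d : ℂ)) :=
    fun w hw => aux_tsum_eq d c hc0 hrec hB hw
  have hAbel := Complex.tendsto_tsum_powerSeries_nhdsWithin_lt hL
  have hCont : Tendsto (fun ζ : ℂ => ∑' n : ℕ, ((c n : ℂ) * z ^ n) * ζ ^ n)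
      (Filter.map Complex.ofReal (nhdsWithin 1 (Set.Iio 1)))
      (nhds ((1 - z) ^ (-(d : ℂ)))) := by
    rw [Filter.tendsto_map'_iff]
    have hev : ∀ᶠ x : ℝ in nhdsWithin 1 (Set.Iio 1),
        ((fun ζ : ℂ => ∑' n : ℕ, ((c n : ℂ) * z ^ n) * ζ ^ n) ∘ Complex.ofReal) x
          = (1 - (x : ℂ) * z) ^ (-(d : ℂ)) := by
      filter_upwards [Ioo_mem_nhdsLT_of_mem (Set.mem_Ioc.mpr ⟨one_pos, le_refl (1 : ℝ)⟩)]
        with x hx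
      have hxz : ‖(x : ℂ) * z‖ < 1 := by
        rw [norm_mul, hz_norm, mul_one, Complex.norm_real, Real.norm_eq_abs,
          _root_.abs_of_pos hx.1]
        exact hx.2
      simp only [Function.comp_apply]
      rw [← hsum_id _ hxz]
      exact tsum_congr fun n => by rw [mul_pow]; ring
    rw [tendsto_congr' hev]
    have hc2 : Tendsto (fun x : ℝ => 1 - (x : ℂ) * z) (nhdsWithin 1 (Set.Iio 1))
        (nhds (1 - z)) := by
      have hcont : Continuous (fun x : ℝ => 1 - (x : ℂ) * z) :=
        continuous_const.sub (Complex.continuous_ofReal.mul continuous_const)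
      have := (hcont.tendsto 1).mono_left (nhdsWithin_le_nhds (s := Set.Iio (1 : ℝ)))
      simpa using this
    exact (continuousAt_cpow_const hslit).tendsto.comp hc2
  have hLeq : L = (1 - z) ^ (-(d : ℂ)) := tendsto_nhds_unique hAbel hCont
  have hzk : ∀ k : ℕ, Complex.exp (-(Complex.I * k * ω)) = z ^ k := by
    intro k
    rw [hz_def, ← Complex.exp_nat_mul]
    congr 1
    ring
  rw [← hLeq]
  have hfinal := hL.comp (tendsto_add_atTop_nat 1)
  exact hfinal.congr fun N => Finset.sum_congr rfl fun k _ => by rw [hzk k]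
end
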